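/- There exists n₀ = n₀(k,t) such that for all n ≥ n₀, a t-intersecting family F of k-multisets of [n] has |F| = binomial(n+k−t−1, k−t) if and only if there is a fixed t-multiset T such that F consists of all k-multisets containing T. -/

import Mathlib

open Finset

lemma EKR_countAll (n k : ℕ) :
    (Finset.piAntidiag (univ : Finset (Fin n)) k).card = (n + k - 1).choose k := by
  rw [← Finset.map_sym_eq_piAntidiag, Finset.card_map]
  have h : (univ : Finset (Fin n)).sym k = univ := by
    ext m
    simp [Finset.mem_sym_iff]
  rw [h, Finset.card_univ, Sym.card_sym_eq_choose, Fintype.card_fin]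

lemma EKR_countStar (n k t : ℕ) (T : Fin n → ℕ) (hT : ∑ i, T i = t) (htk : t ≤ k) :
    ((Finset.piAntidiag (univ : Finset (Fin n)) k).filter (fun m => ∀ i, T i ≤ m i)).card
      = (n + (k - t) - 1).choose (k - t) := by
  rw [← EKR_countAll n (k - t)]
  have him : (Finset.piAntidiag (univ : Finset (Fin n)) k).filter (fun m => ∀ i, T i ≤ m i)
      = (Finset.piAntidiag (univ : Finset (Fin n)) (k - t)).image (fun m => fun i => m i + T i) := by
    ext m'
    simp only [mem_filter, mem_piAntidiag, mem_image]
    constructor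
    · rintro ⟨⟨hsum, -⟩, hle⟩
      refine ⟨fun i => m' i - T i, ⟨?_, fun i _ => mem_univ i⟩, ?_⟩
      · have hsum' : ∑ i, m' i = k := hsum
        have h1 : ∑ i, (m' i - T i + T i) = ∑ i, m' i :=
          Finset.sum_congr rfl (fun i _ => Nat.sub_add_cancel (hle i))
        rw [Finset.sum_add_distrib, hT] at h1
        show ∑ i, (m' i - T i) = k - t
        omega
      · funext i
        exact Nat.sub_add_cancel (hle i)
    · rintro ⟨m, ⟨hsum, -⟩, rfl⟩
      refine ⟨⟨?_, fun i _ => mem_univ i⟩, fun i => Nat.le_add_left _ _⟩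
      have hsum' : ∑ i, m i = k - t := hsum
      show ∑ i, (m i + T i) = k
      rw [Finset.sum_add_distrib, hT, hsum']
      omega
  rw [him, Finset.card_image_of_injective]
  intro a b hab
  funext i
  have := congrFun hab i
  simpa using this

lemma EKR_subsum {n : ℕ} (g : Fin n → ℕ) :
    ∀ t : ℕ, t ≤ ∑ i, g i → ∃ T : Fin n → ℕ, (∀ i, T i ≤ g i) ∧ ∑ i, T i = t := by
  intro t
  induction t with
  | zero => exact fun _ => ⟨0, fun i => Nat.zero_le _, by simp⟩
  | succ t ih =>
    intro h
    obtain ⟨T, hle, hsum⟩ := ih (by omega)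
    have hex : ∃ i, T i < g i := by
      by_contra hc
      push_neg at hc
      have : ∑ i, g i ≤ ∑ i, T i := Finset.sum_le_sum (fun i _ => hc i)
      omega
    obtain ⟨i, hi⟩ := hex
    refine ⟨Function.update T i (T i + 1), ?_, ?_⟩
    · intro j
      rcases eq_or_ne j i with rfl | hj
      · simp; omega
      · simp [Function.update_of_ne hj]; exact hle j
    · rw [Finset.sum_update_of_mem (mem_univ i)]
      have h2 : ∑ j ∈ univ \ {i}, T j + T i = t := by
        rw [← hsum, ← Finset.sum_erase_add univ T (mem_univ i)]
        simp [Finset.sdiff_singleton_eq_erase]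
      omega

/-- For `n` large enough, a t-intersecting family of k-multisets of [n] has
size `(n + k - t - 1).choose (k - t)` iff it is the family of all k-multisets
containing a fixed t-multiset. -/
theorem EKR_multiset_equality (k t : ℕ) (ht : 1 ≤ t) (htk : t ≤ k) :
    ∃ n₀ : ℕ, ∀ n : ℕ, n₀ ≤ n → ∀ F : Finset (Fin n → ℕ),
      (∀ A ∈ F, ∑ i, A i = k) →
      (∀ A ∈ F, ∀ B ∈ F, t ≤ ∑ i, min (A i) (B i)) →
      (F.card = (n + k - t - 1).choose (k - t) ↔
        ∃ T : Fin n → ℕ, ∑ i, T i = t ∧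
          ∀ m : Fin n → ℕ, m ∈ F ↔ (∑ i, m i = k ∧ ∀ i, T i ≤ m i)) := by
  classical
  refine ⟨(k+1)^k * k * k + k + 2, fun n hn F hsum hint => ?_⟩
  set m := k - t with hm
  have hn1 : 2 ≤ n := by omega
  set Bc := (n + k - t - 1).choose (k - t) with hBc
  have hmemS : ∀ (j : ℕ) (f : Fin n → ℕ),
      f ∈ Finset.piAntidiag (univ : Finset (Fin n)) j ↔ ∑ i, f i = j := by
    intro j f
    rw [Finset.mem_piAntidiag]
    simp
  have hStar : ∀ T : Fin n → ℕ, ∑ i, T i = t →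
      ((Finset.piAntidiag (univ : Finset (Fin n)) k).filter (fun m' => ∀ i, T i ≤ m' i)).card
        = Bc := by
    intro T hT
    rw [EKR_countStar n k t T hT htk, hBc]
    congr 1
    omega
  have hBpos : 0 < Bc := by
    rw [hBc]
    exact Nat.choose_pos (by omega)
  constructor
  · intro hcard
    by_cases hex : ∃ T : Fin n → ℕ, ∑ i, T i = t ∧ ∀ A ∈ F, ∀ i, T i ≤ A i
    · obtain ⟨T, hTt, hTle⟩ := hex
      have hsub : F ⊆ (Finset.piAntidiag (univ : Finset (Fin n)) k).filter
          (fun m' => ∀ i, T i ≤ m' i) :=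
        fun A hA => mem_filter.2 ⟨(hmemS k A).2 (hsum A hA), hTle A hA⟩
      have heq : F = (Finset.piAntidiag (univ : Finset (Fin n)) k).filter
          (fun m' => ∀ i, T i ≤ m' i) :=
        Finset.eq_of_subset_of_card_le hsub (by rw [hStar T hTt, ← hcard])
      refine ⟨T, hTt, fun m' => ?_⟩
      rw [heq, mem_filter, hmemS]
    · exfalso
      have hFne : F.Nonempty := Finset.card_pos.1 (by omega)
      obtain ⟨A, hA⟩ := hFne
      by_cases htk' : t = k
      · -- then Bc = 1 and F = {A}, so A is a common t-multiset
        have hBc1 : Bc = 1 := by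
          rw [hBc, htk']
          simp
        obtain ⟨a, haF⟩ := Finset.card_eq_one.1 (by omega : F.card = 1)
        refine hex ⟨a, ?_, ?_⟩
        · have : a ∈ F := by rw [haF]; exact mem_singleton_self a
          rw [hsum a this, htk']
        · intro A' hA' i
          rw [haF, mem_singleton] at hA'
          rw [hA']
      -- now t < k, so 1 ≤ m
      have hm1 : 1 ≤ m := by omega
      set X := (n + m - 2).choose (m - 1) with hX
      set subT := (Finset.piAntidiag (univ : Finset (Fin n)) t).filter
        (fun T => ∀ i, T i ≤ A i) with hsubT
      have hcover : F ⊆ subT.biUnion (fun T => F.filter (fun C => ∀ i, T i ≤ C i)) := by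
        intro B' hB'
        obtain ⟨T, hTle, hTsum⟩ :=
          EKR_subsum (fun i => min (A i) (B' i)) t (hint A hA B' hB')
        refine Finset.mem_biUnion.2 ⟨T, ?_, ?_⟩
        · exact mem_filter.2 ⟨(hmemS t T).2 hTsum,
            fun i => le_trans (hTle i) (min_le_left _ _)⟩
        · exact mem_filter.2 ⟨hB', fun i => le_trans (hTle i) (min_le_right _ _)⟩
      have hperT : ∀ T ∈ subT, (F.filter (fun C => ∀ i, T i ≤ C i)).card ≤ k * X := by
        intro T hT
        obtain ⟨hTmem, hTleA⟩ := mem_filter.1 hT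
        have hTt : ∑ i, T i = t := (hmemS t T).1 hTmem
        have hB0 : ∃ B₀ ∈ F, ¬ ∀ i, T i ≤ B₀ i := by
          by_contra hc
          push_neg at hc
          exact hex ⟨T, hTt, hc⟩
        obtain ⟨B₀, hB₀F, hB₀⟩ := hB0
        push_neg at hB₀
        obtain ⟨j, hj⟩ := hB₀
        set I := univ.filter (fun i => T i < B₀ i) with hI
        have hIcard : I.card ≤ k := by
          have h1 : I ⊆ univ.filter (fun i => 1 ≤ B₀ i) := by
            intro i hi
            simp only [hI, mem_filter] at hi ⊢
            exact ⟨hi.1, by omega⟩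
          have h2 : (univ.filter (fun i => 1 ≤ B₀ i)).card ≤ ∑ i, B₀ i := by
            calc (univ.filter (fun i => 1 ≤ B₀ i)).card
                = ∑ i ∈ univ.filter (fun i => 1 ≤ B₀ i), 1 := by
                  rw [Finset.card_eq_sum_ones]
              _ ≤ ∑ i ∈ univ.filter (fun i => 1 ≤ B₀ i), B₀ i :=
                  Finset.sum_le_sum (fun i hi => (mem_filter.1 hi).2)
              _ ≤ ∑ i, B₀ i :=
                  Finset.sum_le_sum_of_subset (filter_subset _ _)
          rw [hsum B₀ hB₀F] at h2
          exact le_trans (Finset.card_le_card h1) h2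
        have hsub2 : F.filter (fun C => ∀ i, T i ≤ C i) ⊆
            I.biUnion (fun i => (Finset.piAntidiag (univ : Finset (Fin n)) k).filter
              (fun C => ∀ j', Function.update T i (T i + 1) j' ≤ C j')) := by
          intro C hC
          obtain ⟨hCF, hCT⟩ := mem_filter.1 hC
          have hmin : ∑ i, min (T i) (B₀ i) < t := by
            have hlt : ∑ i, min (T i) (B₀ i) < ∑ i, T i :=
              Finset.sum_lt_sum (fun i _ => min_le_left _ _)
                ⟨j, mem_univ j, by omega⟩
            omega
          have hCmin : t ≤ ∑ i, min (C i) (B₀ i) := hint C hCF B₀ hB₀F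
          have hexi : ∃ i, min (T i) (B₀ i) < min (C i) (B₀ i) := by
            by_contra hc
            push_neg at hc
            have := Finset.sum_le_sum (fun i (_ : i ∈ (univ : Finset (Fin n))) => hc i)
            omega
          obtain ⟨i, hi⟩ := hexi
          have h1 : T i < B₀ i := by
            have := hCT i
            omega
          have h2 : T i < C i := by
            have := hCT i
            omega
          refine Finset.mem_biUnion.2 ⟨i, ?_, mem_filter.2 ⟨(hmemS k C).2 (hsum C hCF), ?_⟩⟩
          · simp only [hI, mem_filter]
            exact ⟨mem_univ i, h1⟩
          · intro j'
            rcases eq_or_ne j' i with rfl | hne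
            · simp
              omega
            · simp [Function.update_of_ne hne]
              exact hCT j'
        have hstar' : ∀ i : Fin n,
            ((Finset.piAntidiag (univ : Finset (Fin n)) k).filter
              (fun C => ∀ j', Function.update T i (T i + 1) j' ≤ C j')).card = X := by
          intro i
          have hTsum' : ∑ j', Function.update T i (T i + 1) j' = t + 1 := by
            rw [Finset.sum_update_of_mem (mem_univ i)]
            have h2 : ∑ j' ∈ univ \ {i}, T j' + T i = t := by
              rw [← hTt, ← Finset.sum_erase_add univ T (mem_univ i)]
              simp [Finset.sdiff_singleton_eq_erase]
            omega
          rw [EKR_countStar n k (t+1) _ hTsum' (by omega), hX]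
          congr 1; omega
        calc (F.filter (fun C => ∀ i, T i ≤ C i)).card
            ≤ (I.biUnion (fun i => (Finset.piAntidiag (univ : Finset (Fin n)) k).filter
              (fun C => ∀ j', Function.update T i (T i + 1) j' ≤ C j'))).card :=
              Finset.card_le_card hsub2
          _ ≤ ∑ i ∈ I, ((Finset.piAntidiag (univ : Finset (Fin n)) k).filter
              (fun C => ∀ j', Function.update T i (T i + 1) j' ≤ C j')).card :=
              Finset.card_biUnion_le
          _ = ∑ _i ∈ I, X := Finset.sum_congr rfl (fun i _ => hstar' i)
          _ = I.card * X := by rw [Finset.sum_const, smul_eq_mul]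
          _ ≤ k * X := Nat.mul_le_mul_right X hIcard
      -- bound on subT.card
      have hsubTcard : subT.card ≤ (k+1)^k := by
        set sA := univ.filter (fun i => 0 < A i) with hsA
        have hsAcard : sA.card ≤ k := by
          have h2 : sA.card ≤ ∑ i, A i := by
            calc sA.card = ∑ i ∈ sA, 1 := by rw [Finset.card_eq_sum_ones]
              _ ≤ ∑ i ∈ sA, A i :=
                  Finset.sum_le_sum (fun i hi => (mem_filter.1 hi).2)
              _ ≤ ∑ i, A i := Finset.sum_le_sum_of_subset (filter_subset _ _)
          rw [hsum A hA] at h2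
          exact h2
        have hinj : subT.card ≤ (sA.pi (fun _ => Finset.range (t+1))).card := by
          apply Finset.card_le_card_of_injOn (fun T => fun a _ => T a)
          · intro T hT
            obtain ⟨hTmem, hTleA⟩ := mem_filter.1 hT
            have hTt : ∑ i, T i = t := (hmemS t T).1 hTmem
            refine Finset.mem_pi.2 (fun a _ => ?_)
            rw [Finset.mem_range]
            have hle : T a ≤ t := by
              rw [← hTt]
              exact Finset.single_le_sum (fun i _ => Nat.zero_le _) (mem_univ a)
            show T a < t + 1
            omega
          · intro T1 h1 T2 h2 heq
            funext i
            by_cases hi : i ∈ sA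
            · exact congrFun (congrFun heq i) hi
            · obtain ⟨hT1m, hT1le⟩ := mem_filter.1 h1
              obtain ⟨hT2m, hT2le⟩ := mem_filter.1 h2
              simp only [hsA, mem_filter, mem_univ, true_and, not_lt,
                Nat.le_zero] at hi
              have e1 := hT1le i
              have e2 := hT2le i
              omega
        have hpi : (sA.pi (fun _ => Finset.range (t+1))).card = (t+1) ^ sA.card := by
          rw [Finset.card_pi]
          simp [Finset.prod_const]
        calc subT.card ≤ (t+1) ^ sA.card := hpi ▸ hinj
          _ ≤ (t+1) ^ k := Nat.pow_le_pow_right (by omega) hsAcard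
          _ ≤ (k+1) ^ k := Nat.pow_le_pow_left (by omega) k
      -- total bound
      have hFle : F.card ≤ subT.card * (k * X) := by
        calc F.card ≤ (subT.biUnion (fun T => F.filter (fun C => ∀ i, T i ≤ C i))).card :=
              Finset.card_le_card hcover
          _ ≤ ∑ T ∈ subT, (F.filter (fun C => ∀ i, T i ≤ C i)).card :=
              Finset.card_biUnion_le
          _ ≤ subT.card * (k * X) := by
              have := Finset.sum_le_card_nsmul subT
                (fun T => (F.filter (fun C => ∀ i, T i ≤ C i)).card) (k * X) hperT
              simpa [smul_eq_mul] using this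
      -- numeric contradiction
      have hXpos : 0 < X := by
        rw [hX]
        exact Nat.choose_pos (by omega)
      have hBc' : Bc = (n + m - 1).choose m := by
        rw [hBc]
        congr 1
        omega
      have hkey : (n + m - 1) * X = Bc * m := by
        have h := Nat.add_one_mul_choose_eq (n + m - 2) (m - 1)
        rw [show n + m - 2 + 1 = n + m - 1 by omega,
          show m - 1 + 1 = m by omega] at h
        rw [hBc', hX]
        exact h
      have hnum : (k+1)^k * k * m < n + m - 1 := by
        have h1 : (k+1)^k * k * m ≤ (k+1)^k * k * k :=
          Nat.mul_le_mul_left _ (by omega)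
        omega
      have h2 : ((k+1)^k * k * X) * m < Bc * m := by
        rw [← hkey]
        calc ((k+1)^k * k * X) * m = ((k+1)^k * k * m) * X := by ring
          _ < (n + m - 1) * X := (Nat.mul_lt_mul_right hXpos).2 hnum
      have h3 : (k+1)^k * k * X < Bc := Nat.lt_of_mul_lt_mul_right h2
      have h4 : subT.card * (k * X) ≤ (k+1)^k * k * X := by
        calc subT.card * (k * X) ≤ (k+1)^k * (k * X) :=
              Nat.mul_le_mul_right _ hsubTcard
          _ = (k+1)^k * k * X := by ring
      omega
  · rintro ⟨T, hTt, hmem⟩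
    have heq : F = (Finset.piAntidiag (univ : Finset (Fin n)) k).filter
        (fun m' => ∀ i, T i ≤ m' i) := by
      ext m'
      rw [hmem m', mem_filter, hmemS]
    rw [heq]
    exact hStar T hTt
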